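/- The set of eigenvalues of the adjacency matrix A(X_N) equals the set { ε·|χ(v₁) + χ(v₂) + χ(v₁)χ(v₂)| : χ a character of A, ε ∈ {1, −1} }. -/

import Mathlib

/-- The action of `ℤ/2ℤ` on a commutative group `M` in which the nontrivial element
acts by inversion (negation, in additive language). -/
def negAct (M : Type*) [CommGroup M] : Multiplicative (ZMod 2) →* MulAut M where
  toFun g := if Multiplicative.toAdd g = 0 then 1 else MulEquiv.inv M
  map_one' := by simp
  map_mul' g h := by
    have hinv : MulEquiv.inv M * MulEquiv.inv M = 1 := by
      ext x; simp
    by_cases hg : Multiplicative.toAdd g = 0 <;> by_cases hh : Multiplicative.toAdd h = 0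
    · simp [hg, hh]
    · simp [hg, hh]
    · simp [hg, hh]
    · have h1 : ∀ x : ZMod 2, x ≠ 0 → x = 1 := by decide
      have h2 : (1 : ZMod 2) + 1 = 0 := by decide
      have : Multiplicative.toAdd (g * h) = 0 := by
        simp [h1 _ hg, h1 _ hh, h2]
      simp [this, hg, hh, hinv]

/-- A semidirect product of finite groups is finite. -/
def sdpEquivProd {N G : Type*} [Group N] [Group G] (φ : G →* MulAut N) :
    (N ⋊[φ] G) ≃ N × G where
  toFun x := (x.left, x.right)
  invFun p := ⟨p.1, p.2⟩
  left_inv x := rfl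
  right_inv p := rfl

instance instFintypeSdp {N G : Type*} [Group N] [Group G] [Fintype N] [Fintype G]
    {φ : G →* MulAut N} : Fintype (N ⋊[φ] G) :=
  Fintype.ofEquiv (N × G) (sdpEquivProd φ).symm

namespace FullAux
open Multiplicative

variable {A : Type*} [AddCommGroup A]

abbrev SD (A : Type*) [AddCommGroup A] :=
  Multiplicative A ⋊[negAct (Multiplicative A)] Multiplicative (ZMod 2)

lemma negAct_one_apply (x : Multiplicative A) : negAct (Multiplicative A) 1 x = x := by
  simp [negAct]

lemma negAct_s_apply (x : Multiplicative A) :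
    negAct (Multiplicative A) (ofAdd 1) x = x⁻¹ := by
  have h : (1 : ZMod 2) ≠ 0 := by decide
  simp [negAct, h]

lemma mul_ut (x y : A) (t : Multiplicative (ZMod 2)) :
    (⟨ofAdd x, 1⟩ : SD A) * ⟨ofAdd y, t⟩ = ⟨ofAdd (x + y), t⟩ := by
  refine SemidirectProduct.ext ?_ ?_ <;>
    simp [negAct_one_apply, ofAdd_add]

lemma mul_st (x y : A) (t : Multiplicative (ZMod 2)) :
    (⟨ofAdd x, ofAdd 1⟩ : SD A) * ⟨ofAdd y, t⟩ = ⟨ofAdd (x - y), ofAdd 1 * t⟩ := by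
  refine SemidirectProduct.ext ?_ rfl
  simp [negAct_s_apply, sub_eq_add_neg, ofAdd_add, ofAdd_neg]

lemma s_mul_s : (ofAdd (1 : ZMod 2)) * ofAdd 1 = 1 := by decide

lemma t_cases : ∀ t : Multiplicative (ZMod 2), t = 1 ∨ t = ofAdd 1 := by decide

/-- Translation operator. -/
def transLM (K : Type*) [Semiring K] {G : Type*} [Group G] (h : G) :
    (G → K) →ₗ[K] (G → K) where
  toFun v := fun g => v (h * g)
  map_add' _ _ := rfl
  map_smul' _ _ := rfl

@[simp] lemma transLM_apply {K : Type*} [Semiring K] {G : Type*} [Group G] (h : G)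
    (v : G → K) (g : G) : transLM K h v g = v (h * g) := rfl


lemma exists_common_eigenvector {G : Type*} [Group G] [Fintype G]
    (R : (G → ℂ) →ₗ[ℂ] (G → ℂ))
    (hR : ∀ (h : G) (w : G → ℂ), R (transLM ℂ h w) = transLM ℂ h (R w))
    (h₁ h₂ : G) (hcomm : h₁ * h₂ = h₂ * h₁)
    (lam : ℂ) (v : G → ℂ) (hv0 : v ≠ 0) (hv : R v = lam • v) :
    ∃ (w : G → ℂ) (μ₁ μ₂ : ℂ), w ≠ 0 ∧ R w = lam • w ∧
      transLM ℂ h₁ w = μ₁ • w ∧ transLM ℂ h₂ w = μ₂ • w := by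
  classical
  set E : Submodule ℂ (G → ℂ) := LinearMap.ker (R - lam • LinearMap.id) with hE
  have hEmem : ∀ w, w ∈ E ↔ R w = lam • w := by
    intro w
    rw [hE, LinearMap.mem_ker, LinearMap.sub_apply, LinearMap.smul_apply,
      LinearMap.id_apply, sub_eq_zero]
  have hinvE : ∀ (h : G), ∀ w ∈ E, transLM ℂ h w ∈ E := by
    intro h w hw
    rw [hEmem] at hw ⊢
    rw [hR, hw, map_smul]
  haveI : Nontrivial E := nontrivial_of_ne ⟨v, (hEmem v).mpr hv⟩ 0
    (by simp only [ne_eq, Submodule.mk_eq_zero]; exact hv0)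
  obtain ⟨μ₁, hμ₁⟩ := Module.End.exists_eigenvalue ((transLM ℂ h₁).restrict (hinvE h₁))
  obtain ⟨w₁, hw₁⟩ := hμ₁.exists_hasEigenvector
  set E₁ : Submodule ℂ (G → ℂ) :=
    E ⊓ LinearMap.ker (transLM ℂ h₁ - μ₁ • LinearMap.id) with hE₁
  have hE₁mem : ∀ w, w ∈ E₁ ↔ (w ∈ E ∧ transLM ℂ h₁ w = μ₁ • w) := by
    intro w
    simp only [hE₁, Submodule.mem_inf, LinearMap.mem_ker, LinearMap.sub_apply,
      LinearMap.smul_apply, LinearMap.id_apply, sub_eq_zero]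
  have hw₁E₁ : (w₁ : G → ℂ) ∈ E₁ := by
    rw [hE₁mem]
    refine ⟨w₁.2, ?_⟩
    have h := hw₁.1
    rw [Module.End.mem_eigenspace_iff] at h
    have h' := congrArg (Subtype.val) h
    rw [LinearMap.restrict_coe_apply] at h'
    simpa using h'
  haveI : Nontrivial E₁ := nontrivial_of_ne ⟨(w₁ : G → ℂ), hw₁E₁⟩ 0 (by
    simp only [ne_eq, Submodule.mk_eq_zero, ZeroMemClass.coe_eq_zero]
    exact hw₁.2)
  have hinvE₁ : ∀ w ∈ E₁, transLM ℂ h₂ w ∈ E₁ := by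
    intro w hw
    rw [hE₁mem] at hw ⊢
    refine ⟨hinvE h₂ w hw.1, ?_⟩
    have hTT : transLM ℂ h₁ (transLM ℂ h₂ w) = transLM ℂ h₂ (transLM ℂ h₁ w) := by
      funext g
      simp only [transLM_apply]
      rw [← mul_assoc, ← mul_assoc, hcomm]
    rw [hTT, hw.2, map_smul]
  obtain ⟨μ₂, hμ₂⟩ := Module.End.exists_eigenvalue ((transLM ℂ h₂).restrict hinvE₁)
  obtain ⟨w₂, hw₂⟩ := hμ₂.exists_hasEigenvector
  refine ⟨(w₂ : G → ℂ), μ₁, μ₂, ?_, ?_, ?_, ?_⟩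
  · simpa using hw₂.2
  · exact (hEmem _).mp ((hE₁mem _).mp w₂.2).1
  · exact ((hE₁mem _).mp w₂.2).2
  · have h := hw₂.1
    rw [Module.End.mem_eigenspace_iff] at h
    have h' := congrArg (Subtype.val) h
    rw [LinearMap.restrict_coe_apply] at h'
    simpa using h'

end FullAux

open scoped Classical in
/-- The set of eigenvalues of the adjacency matrix `A(X_N)` of the
toroidal fullerene Cayley graph `X_N` equals
`{ ε·|χ(v₁) + χ(v₂) + χ(v₁)χ(v₂)| : χ a character of A, ε ∈ {1, −1} }`. -/
theorem stmt_10 (N : AddSubgroup (ℤ × ℤ)) [Fintype ((ℤ × ℤ) ⧸ N)]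
    (h1 : (QuotientAddGroup.mk ((1, 0) : ℤ × ℤ) : (ℤ × ℤ) ⧸ N) ≠ 0)
    (h2 : (QuotientAddGroup.mk ((0, 1) : ℤ × ℤ) : (ℤ × ℤ) ⧸ N) ≠ 0)
    (h12 : (QuotientAddGroup.mk ((1, 0) : ℤ × ℤ) : (ℤ × ℤ) ⧸ N) ≠
      QuotientAddGroup.mk ((0, 1) : ℤ × ℤ)) :
    let A := (ℤ × ℤ) ⧸ N
    let v₁ : A := QuotientAddGroup.mk (1, 0)
    let v₂ : A := QuotientAddGroup.mk (0, 1)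
    let G := Multiplicative A ⋊[negAct (Multiplicative A)] Multiplicative (ZMod 2)
    let s : Multiplicative (ZMod 2) := Multiplicative.ofAdd 1
    let a : G := ⟨Multiplicative.ofAdd v₁, s⟩
    let b : G := ⟨Multiplicative.ofAdd (v₁ + v₂), s⟩
    let c : G := ⟨Multiplicative.ofAdd v₂, s⟩
    let Adj : Matrix G G ℂ :=
      fun g h => if g⁻¹ * h = a ∨ g⁻¹ * h = b ∨ g⁻¹ * h = c then 1 else 0
    {lam : ℂ | ∃ v : G → ℂ, v ≠ 0 ∧ Adj.mulVec v = lam • v} =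
      {lam : ℂ | ∃ χ : A → ℂ,
        (∀ x y, χ (x + y) = χ x * χ y) ∧ (∀ x, ‖χ x‖ = 1) ∧
        ∃ ε : ℂ, (ε = 1 ∨ ε = -1) ∧
          lam = ε * ‖χ v₁ + χ v₂ + χ v₁ * χ v₂‖} := by
  intro A v₁ v₂ G s a b c Adj
  have hv1 : v₁ ≠ 0 := h1
  have hv2 : v₂ ≠ 0 := h2
  have hv12 : v₁ ≠ v₂ := h12
  -- distinctness of a, b, c
  have hab : a ≠ b := fun h => hv2 (left_eq_add.mp
    (Multiplicative.ofAdd.injective (congrArg SemidirectProduct.left h)))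
  have hac : a ≠ c := fun h => hv12
    (Multiplicative.ofAdd.injective (congrArg SemidirectProduct.left h))
  have hbc : b ≠ c := fun h => hv1 (add_eq_right.mp
    (Multiplicative.ofAdd.injective (congrArg SemidirectProduct.left h)))
  -- the key formula for mulVec
  have key : ∀ (v : G → ℂ) (g : G),
      Adj.mulVec v g = v (g * a) + v (g * b) + v (g * c) := by
    intro v g
    have e1 : ∀ h : G, Adj g h * v h =
        (if h = g * a then v h else 0) + ((if h = g * b then v h else 0) +
          (if h = g * c then v h else 0)) := by
      intro h
      show (if g⁻¹ * h = a ∨ g⁻¹ * h = b ∨ g⁻¹ * h = c then (1:ℂ) else 0) * v h = _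
      simp only [inv_mul_eq_iff_eq_mul]
      by_cases e₁ : h = g * a <;> by_cases e₂ : h = g * b <;> by_cases e₃ : h = g * c <;>
        first
          | (exfalso; apply hab; exact mul_left_cancel (e₁ ▸ e₂ : g * a = g * b))
          | (exfalso; apply hac; exact mul_left_cancel (e₁ ▸ e₃ : g * a = g * c))
          | (exfalso; apply hbc; exact mul_left_cancel (e₂ ▸ e₃ : g * b = g * c))
          | simp [e₁, e₂, e₃, hab, hac, hbc, Ne.symm hab, Ne.symm hac, Ne.symm hbc]
    show ∑ h : G, Adj g h * v h = _
    rw [Finset.sum_congr rfl fun h _ => e1 h]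
    rw [Finset.sum_add_distrib, Finset.sum_add_distrib]
    have hs : ∀ k : G, (∑ x : G, if x = k then v x else 0) = v k := fun k => by
      refine (Fintype.sum_eq_single k ?_).trans (if_pos rfl)
      intro x hx; exact if_neg hx
    rw [hs, hs, hs, add_assoc]
  have hu : ∀ (x y : A) (t : Multiplicative (ZMod 2)),
      (⟨Multiplicative.ofAdd x, 1⟩ : G) * ⟨Multiplicative.ofAdd y, t⟩ =
        ⟨Multiplicative.ofAdd (x + y), t⟩ := fun x y t => FullAux.mul_ut x y t
  have hsm : ∀ (x y : A) (t : Multiplicative (ZMod 2)),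
      (⟨Multiplicative.ofAdd x, s⟩ : G) * ⟨Multiplicative.ofAdd y, t⟩ =
        ⟨Multiplicative.ofAdd (x - y), s * t⟩ := fun x y t => FullAux.mul_st x y t
  have hss : s * s = 1 := FullAux.s_mul_s
  have htc : ∀ t : Multiplicative (ZMod 2), t = 1 ∨ t = s := FullAux.t_cases
  have hs0 : Multiplicative.toAdd s ≠ (0 : ZMod 2) := by decide
  ext lam
  simp only [Set.mem_setOf_eq]
  constructor
  · rintro ⟨v, hv0, hv⟩
    haveI : Fintype A := ‹Fintype ((ℤ × ℤ) ⧸ N)›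
    have hone : (⟨Multiplicative.ofAdd (0 : A), 1⟩ : G) = 1 := by
      refine SemidirectProduct.ext ?_ rfl
      simp
    obtain ⟨w, lam1, lam2, hw0, hwE, hT1, hT2⟩ := FullAux.exists_common_eigenvector
      { toFun := fun w g => w (g * a) + w (g * b) + w (g * c)
        map_add' := fun x y => by funext g; simp only [Pi.add_apply]; ring
        map_smul' := fun r x => by
          funext g; simp only [Pi.smul_apply, smul_eq_mul, RingHom.id_apply]; ring }
      (by
        intro h w
        funext g
        simp only [FullAux.transLM_apply, LinearMap.coe_mk, AddHom.coe_mk, mul_assoc])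
      (⟨Multiplicative.ofAdd v₁, 1⟩ : G) (⟨Multiplicative.ofAdd v₂, 1⟩ : G)
      (by rw [hu, hu, add_comm])
      lam v hv0 (by
        funext g
        simp only [LinearMap.coe_mk, AddHom.coe_mk]
        rw [← key]
        exact congrFun hv g)
    have hwE' : ∀ g : G, w (g * a) + w (g * b) + w (g * c) = lam * w g := by
      intro g
      have h := congrFun hwE g
      simpa using h
    have hT1' : ∀ g : G, w ((⟨Multiplicative.ofAdd v₁, 1⟩ : G) * g) = lam1 * w g := by
      intro g; have h := congrFun hT1 g; simpa using h
    have hT2' : ∀ g : G, w ((⟨Multiplicative.ofAdd v₂, 1⟩ : G) * g) = lam2 * w g := by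
      intro g; have h := congrFun hT2 g; simpa using h
    obtain ⟨g₀, hg₀⟩ : ∃ g₀, w g₀ ≠ 0 := by
      by_contra hc; push_neg at hc; exact hw0 (funext fun g => hc g)
    -- the subgroup of elements acting on `w` by a scalar
    let S : AddSubgroup A :=
      { carrier := {y : A | ∃ μ : ℂ, ∀ g : G,
          w ((⟨Multiplicative.ofAdd y, 1⟩ : G) * g) = μ * w g}
        zero_mem' := ⟨1, fun g => by rw [hone, one_mul, one_mul]⟩
        add_mem' := by
          rintro y z ⟨μy, hy⟩ ⟨μz, hz⟩
          refine ⟨μy * μz, fun g => ?_⟩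
          rw [← hu y z 1, mul_assoc, hy, hz, mul_assoc]
        neg_mem' := by
          rintro y ⟨μ, hy⟩
          have hid : ∀ g : G, (⟨Multiplicative.ofAdd y, 1⟩ : G) *
              ((⟨Multiplicative.ofAdd (-y), 1⟩ : G) * g) = g := by
            intro g
            rw [← mul_assoc, hu, add_neg_cancel, hone, one_mul]
          have hμ0 : μ ≠ 0 := by
            intro h0
            apply hg₀
            have h := hy ((⟨Multiplicative.ofAdd (-y), 1⟩ : G) * g₀)
            rw [hid, h0, zero_mul] at h
            exact h
          refine ⟨μ⁻¹, fun g => ?_⟩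
          have h := hy ((⟨Multiplicative.ofAdd (-y), 1⟩ : G) * g)
          rw [hid] at h
          rw [h, inv_mul_cancel_left₀ hμ0] }
    have hS : ∀ y : A, ∃ μ : ℂ, ∀ g : G,
        w ((⟨Multiplicative.ofAdd y, 1⟩ : G) * g) = μ * w g := by
      intro y
      have hv₁S : v₁ ∈ S := ⟨lam1, hT1'⟩
      have hv₂S : v₂ ∈ S := ⟨lam2, hT2'⟩
      obtain ⟨p, rfl⟩ := QuotientAddGroup.mk_surjective y
      have hyd : (QuotientAddGroup.mk p : A) = p.1 • v₁ + p.2 • v₂ := by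
        show QuotientAddGroup.mk' N p = p.1 • QuotientAddGroup.mk' N (1, 0) +
          p.2 • QuotientAddGroup.mk' N (0, 1)
        rw [← map_zsmul, ← map_zsmul, ← map_add]
        congr 1
        ext <;> simp
      have : (QuotientAddGroup.mk p : A) ∈ S := by
        rw [hyd]
        exact S.add_mem (S.zsmul_mem hv₁S _) (S.zsmul_mem hv₂S _)
      exact this
    choose χ hχ using hS
    have χ0 : χ 0 = 1 := by
      have h := hχ 0 g₀
      rw [hone, one_mul] at h
      exact mul_right_cancel₀ hg₀ (by rw [one_mul]; exact h.symm)
    have hom : ∀ x y : A, χ (x + y) = χ x * χ y := by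
      intro x y
      have e : w ((⟨Multiplicative.ofAdd (x + y), 1⟩ : G) * g₀) = χ x * (χ y * w g₀) := by
        rw [← hu x y 1, mul_assoc, hχ x, hχ y]
      have h := (hχ (x + y) g₀).symm.trans e
      exact mul_right_cancel₀ hg₀ (by linear_combination h)
    have hne : ∀ x, χ x ≠ 0 := by
      intro x h0
      have h := hom x (-x)
      rw [add_neg_cancel, χ0, h0, zero_mul] at h
      exact one_ne_zero h
    have χpow : ∀ (k : ℕ) (y : A), χ (k • y) = χ y ^ k := by
      intro k y
      induction k with
      | zero => simp [χ0, zero_nsmul, pow_zero]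
      | succ n ih => rw [succ_nsmul, hom, ih, pow_succ]
    have habs : ∀ x, ‖χ x‖ = 1 := by
      intro x
      have h : χ x ^ Fintype.card A = 1 := by
        rw [← χpow, card_nsmul_eq_zero, χ0]
      exact Complex.norm_eq_one_of_pow_eq_one h Fintype.card_ne_zero
    have hconj : ∀ x, χ (-x) = (starRingEnd ℂ) (χ x) := by
      intro x
      have e1 : χ x * χ (-x) = 1 := by rw [← hom, add_neg_cancel, χ0]
      have e2 : χ x * (starRingEnd ℂ) (χ x) = 1 := by
        rw [Complex.mul_conj]
        norm_cast
        rw [Complex.normSq_eq_norm_sq, habs, one_pow]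
      exact mul_left_cancel₀ (hne x) (e1.trans e2.symm)
    -- values of w
    have hval : ∀ (x : A) (t : Multiplicative (ZMod 2)),
        w (⟨Multiplicative.ofAdd x, t⟩ : G) = χ x * w ⟨Multiplicative.ofAdd 0, t⟩ := by
      intro x t
      have h := hχ x (⟨Multiplicative.ofAdd (0 : A), t⟩ : G)
      rw [hu, add_zero] at h
      exact h
    set α : ℂ := w ⟨Multiplicative.ofAdd 0, 1⟩ with hα
    set β : ℂ := w ⟨Multiplicative.ofAdd 0, s⟩ with hβ
    have hαβ : α ≠ 0 ∨ β ≠ 0 := by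
      obtain ⟨m, t⟩ := g₀
      rw [← ofAdd_toAdd m] at hg₀
      rcases htc t with ht | ht <;> subst ht <;> rw [hval] at hg₀
      · exact Or.inl (right_ne_zero_of_mul hg₀)
      · exact Or.inr (right_ne_zero_of_mul hg₀)
    set P : ℂ := χ v₁ + χ v₂ + χ v₁ * χ v₂ with hP
    have hPP : P * (starRingEnd ℂ) P = (‖P‖ : ℂ) ^ 2 := by
      rw [Complex.mul_conj]; norm_cast; exact Complex.normSq_eq_norm_sq P
    have t0 : w 1 = α := by rw [hα, hone]
    have t1 : w a = χ v₁ * β := by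
      rw [show a = (⟨Multiplicative.ofAdd v₁, s⟩ : G) from rfl, hval, hβ]
    have t2 : w b = χ v₁ * χ v₂ * β := by
      rw [show b = (⟨Multiplicative.ofAdd (v₁ + v₂), s⟩ : G) from rfl, hval, hom, hβ]
    have t3 : w c = χ v₂ * β := by
      rw [show c = (⟨Multiplicative.ofAdd v₂, s⟩ : G) from rfl, hval, hβ]
    have eq1 : P * β = lam * α := by
      have e := hwE' 1
      rw [one_mul, one_mul, one_mul, t0, t1, t2, t3] at e
      rw [hP]
      linear_combination e
    have s1 : w ((⟨Multiplicative.ofAdd (0 : A), s⟩ : G) * a) = (starRingEnd ℂ) (χ v₁) * α := by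
      rw [show a = (⟨Multiplicative.ofAdd v₁, s⟩ : G) from rfl, hsm, hss, hval,
        zero_sub, hconj, hα]
    have s2 : w ((⟨Multiplicative.ofAdd (0 : A), s⟩ : G) * b) =
        (starRingEnd ℂ) (χ v₁) * (starRingEnd ℂ) (χ v₂) * α := by
      rw [show b = (⟨Multiplicative.ofAdd (v₁ + v₂), s⟩ : G) from rfl, hsm, hss, hval,
        zero_sub, hconj, hom, map_mul, hα]
    have s3 : w ((⟨Multiplicative.ofAdd (0 : A), s⟩ : G) * c) = (starRingEnd ℂ) (χ v₂) * α := by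
      rw [show c = (⟨Multiplicative.ofAdd v₂, s⟩ : G) from rfl, hsm, hss, hval,
        zero_sub, hconj, hα]
    have eq2 : (starRingEnd ℂ) P * α = lam * β := by
      have e := hwE' ⟨Multiplicative.ofAdd 0, s⟩
      rw [s1, s2, s3, ← hβ] at e
      rw [hP]
      simp only [map_add, map_mul]
      linear_combination e
    have hsq : lam * lam = (‖P‖ : ℂ) ^ 2 := by
      rcases hαβ with hα0 | hβ0
      · have h : (lam * lam - (‖P‖ : ℂ) ^ 2) * α = 0 := by
          linear_combination (-lam) * eq1 - P * eq2 + α * hPP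
        rcases mul_eq_zero.mp h with h' | h'
        · exact sub_eq_zero.mp h'
        · exact absurd h' hα0
      · have h : (lam * lam - (‖P‖ : ℂ) ^ 2) * β = 0 := by
          linear_combination (-(starRingEnd ℂ) P) * eq1 - lam * eq2 + β * hPP
        rcases mul_eq_zero.mp h with h' | h'
        · exact sub_eq_zero.mp h'
        · exact absurd h' hβ0
    have hfac : (lam - (‖P‖ : ℂ)) * (lam + (‖P‖ : ℂ)) = 0 := by
      linear_combination hsq
    rcases mul_eq_zero.mp hfac with h' | h'
    · exact ⟨χ, hom, habs, 1, Or.inl rfl, by rw [one_mul, ← hP]; exact sub_eq_zero.mp h'⟩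
    · refine ⟨χ, hom, habs, -1, Or.inr rfl, ?_⟩
      rw [← hP]
      have := eq_neg_of_add_eq_zero_left h'
      linear_combination h'

  · rintro ⟨χ, hom, habs, ε, hε, rfl⟩
    have hne : ∀ x, χ x ≠ 0 := by
      intro x hx
      have h := habs x; rw [hx] at h; simp at h
    have χ0 : χ 0 = 1 := by
      have h := hom 0 0
      rw [add_zero] at h
      exact (mul_left_cancel₀ (hne 0) (by rw [mul_one, ← h])).symm
    have hconj : ∀ x, χ (-x) = (starRingEnd ℂ) (χ x) := by
      intro x
      have e1 : χ x * χ (-x) = 1 := by rw [← hom, add_neg_cancel, χ0]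
      have e2 : χ x * (starRingEnd ℂ) (χ x) = 1 := by
        rw [Complex.mul_conj]
        norm_cast
        rw [Complex.normSq_eq_norm_sq, habs, one_pow]
      exact mul_left_cancel₀ (hne x) (e1.trans e2.symm)
    set P : ℂ := χ v₁ + χ v₂ + χ v₁ * χ v₂ with hP
    have hPc : (starRingEnd ℂ) P = (starRingEnd ℂ) (χ v₁) + (starRingEnd ℂ) (χ v₂) +
        (starRingEnd ℂ) (χ v₁) * (starRingEnd ℂ) (χ v₂) := by
      rw [hP]; simp [map_add, map_mul]
    have hPP : P * (starRingEnd ℂ) P = (‖P‖ : ℂ) ^ 2 := by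
      rw [Complex.mul_conj]; norm_cast; exact Complex.normSq_eq_norm_sq P
    set δ : ℂ := if P = 0 then 1 else ε * (starRingEnd ℂ) P / (‖P‖ : ℂ) with hδ
    have hPδ : P * δ = ε * (‖P‖ : ℂ) := by
      by_cases hP0 : P = 0
      · simp [hδ, hP0]
      · have habsP : (‖P‖ : ℂ) ≠ 0 := by
          simpa using hP0
        rw [hδ, if_neg hP0]
        field_simp
        linear_combination ε * hPP
    have hδ2 : (ε * (‖P‖ : ℂ)) * δ = (starRingEnd ℂ) P := by
      by_cases hP0 : P = 0
      · simp [hδ, hP0]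
      · have habsP : (‖P‖ : ℂ) ≠ 0 := by simpa using hP0
        rw [hδ, if_neg hP0]
        have hε2 : ε * ε = 1 := by rcases hε with rfl | rfl <;> norm_num
        field_simp
        linear_combination (starRingEnd ℂ) P * hε2
    refine ⟨fun g => χ (Multiplicative.toAdd g.left) *
      (if Multiplicative.toAdd g.right = (0 : ZMod 2) then 1 else δ), ?_, ?_⟩
    · intro h0
      have h := congrFun h0 1
      simp only [SemidirectProduct.one_left, SemidirectProduct.one_right, Pi.zero_apply] at h
      rw [toAdd_one, χ0] at h
      norm_num at h
    · funext g
      rw [key]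
      obtain ⟨m, t⟩ := g
      rw [← ofAdd_toAdd m]
      rcases htc t with ht | ht <;> subst ht
      · have e₁ := hu (Multiplicative.toAdd m) v₁ s
        have e₂ := hu (Multiplicative.toAdd m) (v₁ + v₂) s
        have e₃ := hu (Multiplicative.toAdd m) v₂ s
        rw [show a = (⟨Multiplicative.ofAdd v₁, s⟩ : G) from rfl]
        rw [show b = (⟨Multiplicative.ofAdd (v₁ + v₂), s⟩ : G) from rfl]
        rw [show c = (⟨Multiplicative.ofAdd v₂, s⟩ : G) from rfl]
        rw [e₁, e₂, e₃]
        simp only [Pi.smul_apply, smul_eq_mul, toAdd_ofAdd, toAdd_one, if_pos rfl, if_neg hs0, eq_self_iff_true, if_true]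
        simp only [hom, mul_one]
        linear_combination χ (Multiplicative.toAdd m) * hPδ -
          χ (Multiplicative.toAdd m) * δ * hP
      · have e₁ := hsm (Multiplicative.toAdd m) v₁ s
        have e₂ := hsm (Multiplicative.toAdd m) (v₁ + v₂) s
        have e₃ := hsm (Multiplicative.toAdd m) v₂ s
        rw [hss] at e₁ e₂ e₃
        rw [show a = (⟨Multiplicative.ofAdd v₁, s⟩ : G) from rfl]
        rw [show b = (⟨Multiplicative.ofAdd (v₁ + v₂), s⟩ : G) from rfl]
        rw [show c = (⟨Multiplicative.ofAdd v₂, s⟩ : G) from rfl]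
        rw [e₁, e₂, e₃]
        simp only [Pi.smul_apply, smul_eq_mul, toAdd_ofAdd, toAdd_one, if_pos rfl, if_neg hs0, eq_self_iff_true, if_true]
        simp only [sub_eq_add_neg, hom, hconj, mul_one, map_mul]
        linear_combination -χ (Multiplicative.toAdd m) * hδ2 -
          χ (Multiplicative.toAdd m) * hPc
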